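/- Under the factor model and the quadratic regression model, if either condition (C1) Δ = 3 or condition (C2) diag(Γ₀ᵀΩΓ₀) = 0 holds, then Λ_y = 2ΣΩΣ, and consequently the interaction matrix has the explicit form Ω = Σ⁻¹ Λ_y Σ⁻¹ / 2. (This is the interaction part of Proposition 1.) -/

import Mathlib

open Matrix MeasureTheory ProbabilityTheory
open scoped ENNReal

private lemma l2mul {α : Type*} [MeasurableSpace α] {μ : Measure α} {f g : α → ℝ}
    (hf : MemLp f 2 μ) (hg : MemLp g 2 μ) : Integrable (fun ω => f ω * g ω) μ := by
  have h1 : (1 : ℝ≥0∞) / 1 = 1 / 2 + 1 / 2 := by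
    rw [ENNReal.div_add_div_same, one_div]
    norm_num
    rw [ENNReal.div_self] <;> norm_num
  exact memLp_one_iff_integrable.mp (hg.smul hf (r := 1))


/-- (Interaction part of Proposition 1.)  Under the factor model `x = Γ₀z + u` and the quadratic
regression model `E(Y|x) = α + (x−u)ᵀβ + (x−u)ᵀΩ(x−u)` a.s., if either (C1) `Δ = 3` or
(C2) `diag(Γ₀ᵀΩΓ₀) = 0`, then `Λ_y = 2ΣΩΣ` where
`Λ_y := E[(Y − E Y)(x − u)(x − u)ᵀ]`, and consequently `Ω = Σ⁻¹Λ_yΣ⁻¹/2`. -/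
theorem interaction_explicit_form {p q : ℕ} {Ω : Type*} [MeasurableSpace Ω]
    (μ : Measure Ω) [IsProbabilityMeasure μ]
    (z : Ω → Fin q → ℝ) (Γ₀ : Matrix (Fin p) (Fin q) ℝ) (u : Fin p → ℝ)
    (Sig Om : Matrix (Fin p) (Fin p) ℝ) (Y : Ω → ℝ) (αc : ℝ) (βv : Fin p → ℝ) (Δ : ℝ)
    -- the factor z has i.i.d. coordinates with the stated moments
    (hz_meas : ∀ k, Measurable fun ω => z ω k)
    (hz_indep : iIndepFun (fun k ω => z ω k) μ)
    (hz_ident : ∀ k l, IdentDistrib (fun ω => z ω k) (fun ω => z ω l) μ μ)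
    (hm1 : ∀ k, ∫ ω, z ω k ∂μ = 0)
    (hm2 : ∀ k, ∫ ω, (z ω k) ^ 2 ∂μ = 1)
    (hm3 : ∀ k, ∫ ω, (z ω k) ^ 3 ∂μ = 0)
    (hm4 : ∀ k, ∫ ω, (z ω k) ^ 4 ∂μ = Δ)
    (hint4 : ∀ k, Integrable (fun ω => (z ω k) ^ 4) μ)
    -- Γ₀Γ₀ᵀ = Σ with Σ positive definite
    (hSig : Γ₀ * Γ₀ᵀ = Sig) (hSigPD : Sig.PosDef)
    -- Y is a square-integrable response
    (hY_meas : Measurable Y) (hY2 : MemLp Y 2 μ)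
    -- Ω is symmetric
    (hOm : Om.IsSymm)
    -- the quadratic regression model, with x := Γ₀ z + u (so that x − u = Γ₀ z)
    (hmodel : μ[Y | MeasurableSpace.comap (fun ω => Γ₀.mulVec (z ω) + u) inferInstance]
        =ᵐ[μ] fun ω => αc + Γ₀.mulVec (z ω) ⬝ᵥ βv +
          Γ₀.mulVec (z ω) ⬝ᵥ Om.mulVec (Γ₀.mulVec (z ω)))
    -- condition (C1) or condition (C2)
    (hC : Δ = 3 ∨ ∀ k, (Γ₀ᵀ * Om * Γ₀) k k = 0) :
    (Matrix.of fun k l =>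
        ∫ ω, (Y ω - ∫ ω', Y ω' ∂μ) * Γ₀.mulVec (z ω) k * Γ₀.mulVec (z ω) l ∂μ) =
        (2 : ℝ) • (Sig * Om * Sig) ∧
      Om = (1 / 2 : ℝ) • (Sig⁻¹ * (Matrix.of fun k l =>
        ∫ ω, (Y ω - ∫ ω', Y ω' ∂μ) * Γ₀.mulVec (z ω) k * Γ₀.mulVec (z ω) l ∂μ) * Sig⁻¹) := by
  classical
  set M : Matrix (Fin q) (Fin q) ℝ := Γ₀ᵀ * Om * Γ₀ with hM
  have hzz_m : ∀ a b : Fin q, Measurable fun ω => z ω a * z ω b :=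
    fun a b => (hz_meas a).mul (hz_meas b)
  -- L² facts
  have hzz2 : ∀ a b : Fin q, MemLp (fun ω => z ω a * z ω b) 2 μ := by
    intro a b
    rw [memLp_two_iff_integrable_sq (hzz_m a b).aestronglyMeasurable]
    refine Integrable.mono' (g := fun ω => (1/2 : ℝ) * ((z ω a)^4 + (z ω b)^4))
      ((((hint4 a).add (hint4 b)).const_mul _))
      ((hzz_m a b).pow_const 2).aestronglyMeasurable
      (Filter.Eventually.of_forall fun ω => ?_)
    rw [Real.norm_eq_abs, abs_of_nonneg (by positivity)]
    nlinarith [sq_nonneg ((z ω a)^2 - (z ω b)^2), sq_nonneg (z ω a * z ω b)]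
  have hz2 : ∀ a : Fin q, MemLp (fun ω => z ω a) 2 μ := by
    intro a
    rw [memLp_two_iff_integrable_sq (hz_meas a).aestronglyMeasurable]
    refine Integrable.mono' (g := fun ω => (1/2 : ℝ) * ((z ω a)^4 + 1))
      (((hint4 a).add (integrable_const 1)).const_mul _)
      ((hz_meas a).pow_const 2).aestronglyMeasurable
      (Filter.Eventually.of_forall fun ω => ?_)
    rw [Real.norm_eq_abs, abs_of_nonneg (by positivity)]
    nlinarith [sq_nonneg ((z ω a)^2 - 1)]
  have intZ : ∀ a, Integrable (fun ω => z ω a) μ := fun a => (hz2 a).integrable one_le_two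
  have intZZ : ∀ a b, Integrable (fun ω => z ω a * z ω b) μ := fun a b => l2mul (hz2 a) (hz2 b)
  have intZZZ : ∀ a b c, Integrable (fun ω => z ω a * z ω b * z ω c) μ :=
    fun a b c => l2mul (hzz2 a b) (hz2 c)
  have intZZZZ : ∀ a b c d, Integrable (fun ω => z ω a * z ω b * z ω c * z ω d) μ := by
    intro a b c d
    have := l2mul (hzz2 a b) (hzz2 c d)
    simpa [mul_assoc] using this
  have asm : ∀ a, AEStronglyMeasurable (fun ω => z ω a) μ := fun a => (hz_meas a).aestronglyMeasurable
  have asm2 : ∀ a b, AEStronglyMeasurable (fun ω => z ω a * z ω b) μ :=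
    fun a b => (hzz_m a b).aestronglyMeasurable
  have kmul : ∀ X V : Ω → ℝ, IndepFun X V μ → AEStronglyMeasurable X μ → AEStronglyMeasurable V μ →
      ∫ ω, X ω * V ω ∂μ = (∫ ω, X ω ∂μ) * ∫ ω, V ω ∂μ := fun X V h hX hV => h.integral_mul_eq_mul_integral hX hV
  have ind21 : ∀ a b c : Fin q, a ≠ c → b ≠ c →
      IndepFun (fun ω => z ω a * z ω b) (fun ω => z ω c) μ :=
    fun a b c h1 h2 => hz_indep.indepFun_mul_left hz_meas a b c h1 h2
  have ind22 : ∀ a b c d : Fin q, a ≠ c → a ≠ d → b ≠ c → b ≠ d →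
      IndepFun (fun ω => z ω a * z ω b) (fun ω => z ω c * z ω d) μ :=
    fun a b c d h1 h2 h3 h4 => hz_indep.indepFun_mul_mul hz_meas a b c d h1 h2 h3 h4
  have indcube : ∀ a d : Fin q, a ≠ d → IndepFun (fun ω => (z ω a)^3) (fun ω => z ω d) μ :=
    fun a d h => (hz_indep.indepFun h).comp (measurable_id.pow_const 3) measurable_id
  have Isq : ∀ a, ∫ ω, z ω a * z ω a ∂μ = 1 := by
    intro a; simpa [pow_two] using hm2 a
  have I2' : ∀ a b : Fin q, a ≠ b → ∫ ω, z ω a * z ω b ∂μ = 0 := by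
    intro a b hab
    have h := kmul _ _ (hz_indep.indepFun hab) (asm a) (asm b)
    simpa [hm1 b] using h
  have I2 : ∀ a b : Fin q, ∫ ω, z ω a * z ω b ∂μ = if a = b then 1 else 0 := by
    intro a b; by_cases hab : a = b
    · subst hab; simp [Isq a]
    · simp [hab, I2' a b hab]
  have I3 : ∀ a b c : Fin q, ∫ ω, z ω a * z ω b * z ω c ∂μ = 0 := by
    intro a b c
    by_cases hab : a = b
    · subst hab
      by_cases hac : a = c
      · subst hac; simpa [pow_succ, pow_two, mul_assoc] using hm3 a
      · have h := kmul _ _ (ind21 a a c hac hac) (asm2 a a) (asm c)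
        simpa [hm1 c] using h
    · by_cases hbc : b = c
      · subst hbc
        rw [show (fun ω => z ω a * z ω b * z ω b) = fun ω => z ω b * z ω b * z ω a from
          funext fun ω => by ring]
        have h := kmul _ _ (ind21 b b a (Ne.symm hab) (Ne.symm hab)) (asm2 b b) (asm a)
        simpa [hm1 a] using h
      · by_cases hac : a = c
        · subst hac
          rw [show (fun ω => z ω a * z ω b * z ω a) = fun ω => z ω a * z ω a * z ω b from
            funext fun ω => by ring]
          have h := kmul _ _ (ind21 a a b hab hab) (asm2 a a) (asm b)
          simpa [hm1 b] using h
        · have h := kmul _ _ (ind21 a b c hac hbc) (asm2 a b) (asm c)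
          simpa [hm1 c] using h
  have I4 : ∀ a b c d : Fin q, ∫ ω, z ω a * z ω b * z ω c * z ω d ∂μ =
      (if a = b then (1:ℝ) else 0) * (if c = d then 1 else 0) +
      (if a = c then (1:ℝ) else 0) * (if b = d then 1 else 0) +
      (if a = d then (1:ℝ) else 0) * (if b = c then 1 else 0) +
      (if a = b then (1:ℝ) else 0) * (if a = c then 1 else 0) * (if a = d then 1 else 0) * (Δ - 3) := by
    intro a b c d
    by_cases hab : a = b
    · subst hab
      by_cases hcd : c = d
      · subst hcd
        by_cases hac : a = c
        · subst hac
          rw [show (fun ω => z ω a * z ω a * z ω a * z ω a) = fun ω => (z ω a)^4 from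
            funext fun ω => by ring, hm4 a]
          norm_num
        · rw [show (fun ω => z ω a * z ω a * z ω c * z ω c)
              = fun ω => (z ω a * z ω a) * (z ω c * z ω c) from funext fun ω => by ring,
            kmul _ _ (ind22 a a c c hac hac hac hac) (asm2 a a) (asm2 c c), Isq a, Isq c]
          simp [hac]
      · by_cases hac : a = c
        · subst hac
          have had : a ≠ d := hcd
          rw [show (fun ω => z ω a * z ω a * z ω a * z ω d) = fun ω => (z ω a)^3 * z ω d from
            funext fun ω => by ring,
            kmul _ _ (indcube _ _ had)
              ((hz_meas a).pow_const 3).aestronglyMeasurable (asm d), hm1 d]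
          simp [hcd, had]
        · by_cases had : a = d
          · subst had
            rw [show (fun ω => z ω a * z ω a * z ω c * z ω a) = fun ω => (z ω a)^3 * z ω c from
              funext fun ω => by ring,
              kmul _ _ (indcube _ _ hac)
                ((hz_meas a).pow_const 3).aestronglyMeasurable (asm c), hm1 c]
            simp [hcd, hac]
          · rw [show (fun ω => z ω a * z ω a * z ω c * z ω d)
                = fun ω => (z ω a * z ω a) * (z ω c * z ω d) from funext fun ω => by ring,
              kmul _ _ (ind22 a a c d hac had hac had) (asm2 a a) (asm2 c d), I2' c d hcd]
            simp [hcd, hac, had]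
    · by_cases hcd : c = d
      · subst hcd
        by_cases hca : c = a
        · subst hca
          rw [show (fun ω => z ω c * z ω b * z ω c * z ω c) = fun ω => (z ω c)^3 * z ω b from
            funext fun ω => by ring,
            kmul _ _ (indcube c b hab)
              ((hz_meas c).pow_const 3).aestronglyMeasurable (asm b), hm1 b]
          simp [hab, Ne.symm hab]
        · by_cases hcb : c = b
          · subst hcb
            rw [show (fun ω => z ω a * z ω c * z ω c * z ω c) = fun ω => (z ω c)^3 * z ω a from
              funext fun ω => by ring,
              kmul _ _ (indcube c a hca)
                ((hz_meas c).pow_const 3).aestronglyMeasurable (asm a), hm1 a]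
            simp [hab, hca, Ne.symm hca]
          · rw [show (fun ω => z ω a * z ω b * z ω c * z ω c)
                = fun ω => (z ω a * z ω b) * (z ω c * z ω c) from funext fun ω => by ring,
              kmul _ _ (ind22 a b c c (Ne.symm hca) (Ne.symm hca) (Ne.symm hcb) (Ne.symm hcb))
                (asm2 a b) (asm2 c c), I2' a b hab]
            simp [hab, Ne.symm hca, Ne.symm hcb]
      · by_cases hac : a = c
        · subst hac
          by_cases hbd : b = d
          · subst hbd
            rw [show (fun ω => z ω a * z ω b * z ω a * z ω b)
                = fun ω => (z ω a * z ω a) * (z ω b * z ω b) from funext fun ω => by ring,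
              kmul _ _ (ind22 a a b b hab hab hab hab) (asm2 a a) (asm2 b b), Isq a, Isq b]
            simp [hab]
          · by_cases had : a = d
            · subst had
              rw [show (fun ω => z ω a * z ω b * z ω a * z ω a) = fun ω => (z ω a)^3 * z ω b from
                funext fun ω => by ring,
                kmul _ _ (indcube _ _ hab)
                  ((hz_meas a).pow_const 3).aestronglyMeasurable (asm b), hm1 b]
              simp [hab, hcd, hbd]
            · rw [show (fun ω => z ω a * z ω b * z ω a * z ω d)
                  = fun ω => (z ω a * z ω a) * (z ω b * z ω d) from funext fun ω => by ring,
                kmul _ _ (ind22 a a b d hab had hab had) (asm2 a a) (asm2 b d), I2' b d hbd]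
              simp [hab, hbd, had, hcd]
        · by_cases had : a = d
          · subst had
            by_cases hbc : b = c
            · subst hbc
              rw [show (fun ω => z ω a * z ω b * z ω b * z ω a)
                  = fun ω => (z ω a * z ω a) * (z ω b * z ω b) from funext fun ω => by ring,
                kmul _ _ (ind22 a a b b hab hab hab hab) (asm2 a a) (asm2 b b), Isq a, Isq b]
              simp [hab, hac]
            · rw [show (fun ω => z ω a * z ω b * z ω c * z ω a)
                  = fun ω => (z ω a * z ω a) * (z ω b * z ω c) from funext fun ω => by ring,
                kmul _ _ (ind22 a a b c hab hac hab hac) (asm2 a a) (asm2 b c), I2' b c hbc]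
              simp [hab, hac, hbc, hcd]
          · by_cases hbc : b = c
            · subst hbc
              rw [show (fun ω => z ω a * z ω b * z ω b * z ω d)
                  = fun ω => (z ω b * z ω b) * (z ω a * z ω d) from funext fun ω => by ring,
                kmul _ _ (ind22 b b a d (Ne.symm hab) (fun h => hcd h) (Ne.symm hab) (fun h => hcd h))
                  (asm2 b b) (asm2 a d), I2' a d had]
              simp [hab, hac, had]
            · by_cases hbd : b = d
              · subst hbd
                rw [show (fun ω => z ω a * z ω b * z ω c * z ω b)
                    = fun ω => (z ω b * z ω b) * (z ω a * z ω c) from funext fun ω => by ring,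
                  kmul _ _ (ind22 b b a c (Ne.symm hab) (Ne.symm hcd) (Ne.symm hab) (Ne.symm hcd))
                    (asm2 b b) (asm2 a c), I2' a c hac]
                simp [hab, hac, had, hbc]
              · rw [show (fun ω => z ω a * z ω b * z ω c * z ω d)
                    = fun ω => (z ω a * z ω b) * (z ω c * z ω d) from funext fun ω => by ring,
                  kmul _ _ (ind22 a b c d hac had hbc hbd) (asm2 a b) (asm2 c d), I2' a b hab]
                simp [hab, hac, had, hbc, hbd, hcd]
  -- pointwise expansions
  have hW : ∀ (k : Fin p) (ω : Ω), Γ₀.mulVec (z ω) k = ∑ a, Γ₀ k a * z ω a := by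
    intro k ω; simp [Matrix.mulVec, dotProduct]
  have hSigE : ∀ k l : Fin p, Sig k l = ∑ a, Γ₀ k a * Γ₀ l a := by
    intro k l; rw [← hSig]; simp [Matrix.mul_apply, Matrix.transpose_apply]
  have hHsum : ∀ (k l : Fin p) (ω : Ω), Γ₀.mulVec (z ω) k * Γ₀.mulVec (z ω) l
      = ∑ ab : Fin q × Fin q, Γ₀ k ab.1 * Γ₀ l ab.2 * (z ω ab.1 * z ω ab.2) := by
    intro k l ω
    rw [hW, hW, Finset.sum_mul_sum, Fintype.sum_prod_type]
    exact Finset.sum_congr rfl fun a _ => Finset.sum_congr rfl fun b _ => by ring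
  have hLsum : ∀ ω : Ω, Γ₀.mulVec (z ω) ⬝ᵥ βv = ∑ a, Γ₀ᵀ.mulVec βv a * z ω a := by
    intro ω
    rw [dotProduct_comm, Matrix.dotProduct_mulVec, ← Matrix.mulVec_transpose]
    simp [dotProduct]
  have hQsum : ∀ ω : Ω, Γ₀.mulVec (z ω) ⬝ᵥ Om.mulVec (Γ₀.mulVec (z ω))
      = ∑ cd : Fin q × Fin q, M cd.1 cd.2 * (z ω cd.1 * z ω cd.2) := by
    intro ω
    rw [Matrix.mulVec_mulVec, Matrix.dotProduct_mulVec, ← Matrix.vecMul_transpose,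
      Matrix.vecMul_vecMul, ← Matrix.mul_assoc, ← hM, Fintype.sum_prod_type]
    simp only [Matrix.vecMul, dotProduct, Finset.sum_mul]
    rw [Finset.sum_comm]
    exact Finset.sum_congr rfl fun a _ => Finset.sum_congr rfl fun b _ => by ring
  -- measurability of x and the sub-σ-algebra
  have hWm : ∀ k : Fin p, Measurable fun ω => Γ₀.mulVec (z ω) k := by
    intro k
    simp only [Matrix.mulVec, dotProduct]
    exact Finset.measurable_sum _ fun a _ => (hz_meas a).const_mul _
  have hx_meas : Measurable fun ω => Γ₀.mulVec (z ω) + u := by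
    apply measurable_pi_lambda
    intro k
    exact ((hWm k).add measurable_const : Measurable fun ω => Γ₀.mulVec (z ω) k + u k)
  have hm_le : MeasurableSpace.comap (fun ω => Γ₀.mulVec (z ω) + u) inferInstance ≤ _ := hx_meas.comap_le
  haveI hsf : SigmaFinite (μ.trim hm_le) := by
    haveI := isFiniteMeasure_trim (μ := μ) hm_le
    infer_instance
  -- the regression function
  set g : Ω → ℝ := fun ω => αc + Γ₀.mulVec (z ω) ⬝ᵥ βv +
      Γ₀.mulVec (z ω) ⬝ᵥ Om.mulVec (Γ₀.mulVec (z ω)) with hg_def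
  have hgsum : ∀ ω, g ω = αc + (∑ a, Γ₀ᵀ.mulVec βv a * z ω a)
      + ∑ cd : Fin q × Fin q, M cd.1 cd.2 * (z ω cd.1 * z ω cd.2) := by
    intro ω
    rw [hg_def]
    simp only []
    rw [hLsum ω, hQsum ω]
  have intL : Integrable (fun ω => ∑ a, Γ₀ᵀ.mulVec βv a * z ω a) μ :=
    integrable_finset_sum _ fun a _ => (intZ a).const_mul _
  have intQ : Integrable (fun ω => ∑ cd : Fin q × Fin q, M cd.1 cd.2 * (z ω cd.1 * z ω cd.2)) μ :=
    integrable_finset_sum _ fun cd _ => (intZZ cd.1 cd.2).const_mul _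
  have intg : Integrable g μ := by
    rw [show g = fun ω => αc + (∑ a, Γ₀ᵀ.mulVec βv a * z ω a)
      + ∑ cd : Fin q × Fin q, M cd.1 cd.2 * (z ω cd.1 * z ω cd.2) from funext hgsum]
    exact ((integrable_const αc).add intL).add intQ
  have intgval : ∫ ω, g ω ∂μ = αc + ∑ a : Fin q, M a a := by
    rw [show (fun ω => g ω) = fun ω => αc + (∑ a, Γ₀ᵀ.mulVec βv a * z ω a)
      + ∑ cd : Fin q × Fin q, M cd.1 cd.2 * (z ω cd.1 * z ω cd.2) from funext hgsum]
    have iC : Integrable (fun _ : Ω => αc) μ := integrable_const αc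
    have i1 : Integrable (fun ω => αc + ∑ a, Γ₀ᵀ.mulVec βv a * z ω a) μ := iC.add intL
    rw [integral_add i1 intQ, integral_add iC intL, integral_const]
    rw [integral_finset_sum _ fun a _ => (intZ a).const_mul _,
      integral_finset_sum _ fun cd _ => (intZZ cd.1 cd.2).const_mul _]
    simp only [integral_const_mul, hm1, mul_zero, Finset.sum_const_zero, I2]
    rw [Fintype.sum_prod_type]
    simp [mul_ite, Finset.sum_ite_eq, measure_univ]
  have hEg : ∫ ω, Y ω ∂μ = αc + ∑ a : Fin q, M a a := by
    rw [← intgval, ← integral_condExp hm_le (f := Y)]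
    exact integral_congr_ae hmodel
  -- nested-sum variants
  have hQsumN : ∀ ω : Ω, Γ₀.mulVec (z ω) ⬝ᵥ Om.mulVec (Γ₀.mulVec (z ω))
      = ∑ c, ∑ d, M c d * (z ω c * z ω d) := fun ω => by
    rw [hQsum ω, Fintype.sum_prod_type]
  have hHsumN : ∀ (k l : Fin p) (ω : Ω), Γ₀.mulVec (z ω) k * Γ₀.mulVec (z ω) l
      = ∑ a, ∑ b, Γ₀ k a * Γ₀ l b * (z ω a * z ω b) := fun k l ω => by
    rw [hHsum k l ω, Fintype.sum_prod_type]
  have hgsumN : ∀ ω, g ω = αc + (∑ c, Γ₀ᵀ.mulVec βv c * z ω c)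
      + ∑ c, ∑ d, M c d * (z ω c * z ω d) := by
    intro ω
    rw [hgsum ω, Fintype.sum_prod_type]
  -- the key entrywise computation
  have key : ∀ k l : Fin p,
      ∫ ω, (Y ω - ∫ ω', Y ω' ∂μ) * Γ₀.mulVec (z ω) k * Γ₀.mulVec (z ω) l ∂μ
        = 2 * (Γ₀ * M * Γ₀ᵀ) k l := by
    intro k l
    set h : Ω → ℝ := fun ω => Γ₀.mulVec (z ω) k * Γ₀.mulVec (z ω) l with hh_def
    have hh2 : MemLp h 2 μ := by
      rw [show h = fun ω => ∑ ab : Fin q × Fin q, Γ₀ k ab.1 * Γ₀ l ab.2 * (z ω ab.1 * z ω ab.2)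
        from funext fun ω => hHsum k l ω]
      exact memLp_finset_sum _ fun ab _ => (hzz2 ab.1 ab.2).const_mul _
    have hint_h : Integrable h μ := hh2.integrable one_le_two
    have hint_hY : Integrable (fun ω => h ω * Y ω) μ := l2mul hh2 hY2
    -- strong measurability of h with respect to m
    have hφ : Measurable fun v : Fin p → ℝ => (v k - u k) * (v l - u l) :=
      ((measurable_pi_apply k).sub measurable_const).mul
        ((measurable_pi_apply l).sub measurable_const)
    have hxm := comap_measurable (m := inferInstance) (fun ω => Γ₀.mulVec (z ω) + u)
    have hsm : StronglyMeasurable[MeasurableSpace.comap (fun ω => Γ₀.mulVec (z ω) + u) inferInstance] h := by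
      have he : h = (fun v : Fin p → ℝ => (v k - u k) * (v l - u l)) ∘
          (fun ω => Γ₀.mulVec (z ω) + u) := by
        funext ω
        simp only [hh_def, Function.comp_apply, Pi.add_apply]
        ring
      rw [he]
      exact (hφ.comp hxm).stronglyMeasurable
    have hpull : μ[(h * Y : Ω → ℝ)|MeasurableSpace.comap (fun ω => Γ₀.mulVec (z ω) + u) inferInstance] =ᵐ[μ] h * μ[Y|MeasurableSpace.comap (fun ω => Γ₀.mulVec (z ω) + u) inferInstance] :=
      condExp_mul_of_stronglyMeasurable_left hsm hint_hY (hY2.integrable one_le_two)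
    have hIHY : ∫ ω, h ω * Y ω ∂μ = ∫ ω, h ω * g ω ∂μ := by
      calc ∫ ω, h ω * Y ω ∂μ = ∫ ω, (μ[(h * Y : Ω → ℝ)|MeasurableSpace.comap (fun ω => Γ₀.mulVec (z ω) + u) inferInstance]) ω ∂μ := (integral_condExp hm_le).symm
        _ = ∫ ω, (h * μ[Y|MeasurableSpace.comap (fun ω => Γ₀.mulVec (z ω) + u) inferInstance]) ω ∂μ := integral_congr_ae hpull
        _ = ∫ ω, h ω * g ω ∂μ := by
            refine integral_congr_ae ?_
            filter_upwards [hmodel] with ω hω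
            simp only [Pi.mul_apply, hω]
    -- value of ∫ h
    have hval : ∫ ω, h ω ∂μ = Sig k l := by
      rw [show h = fun ω => ∑ ab : Fin q × Fin q, Γ₀ k ab.1 * Γ₀ l ab.2 * (z ω ab.1 * z ω ab.2)
        from funext fun ω => hHsum k l ω,
        integral_finset_sum _ fun ab _ => (intZZ ab.1 ab.2).const_mul _]
      simp only [integral_const_mul, I2]
      rw [Fintype.sum_prod_type, hSigE k l]
      simp [mul_ite, Finset.sum_ite_eq]
    -- pointwise expansion of h * g
    have hptw : ∀ ω, h ω * g ω = αc * h ω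
        + (∑ a, ∑ b, ∑ c, Γ₀ k a * Γ₀ l b * Γ₀ᵀ.mulVec βv c * (z ω a * z ω b * z ω c))
        + (∑ a, ∑ b, ∑ c, ∑ d, Γ₀ k a * Γ₀ l b * M c d * (z ω a * z ω b * z ω c * z ω d)) := by
      intro ω
      rw [hgsumN ω, mul_add, mul_add, mul_comm (h ω) αc]
      congr 1
      · congr 1
        rw [hh_def]
        simp only []
        rw [hHsumN k l ω, Finset.sum_mul]
        refine Finset.sum_congr rfl fun a _ => ?_
        rw [Finset.sum_mul]
        refine Finset.sum_congr rfl fun b _ => ?_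
        rw [Finset.mul_sum]
        exact Finset.sum_congr rfl fun c _ => by ring
      · rw [hh_def]
        simp only []
        rw [hHsumN k l ω, Finset.sum_mul]
        refine Finset.sum_congr rfl fun a _ => ?_
        rw [Finset.sum_mul]
        refine Finset.sum_congr rfl fun b _ => ?_
        rw [Finset.mul_sum]
        refine Finset.sum_congr rfl fun c _ => ?_
        rw [Finset.mul_sum]
        exact Finset.sum_congr rfl fun d _ => by ring
    -- integral of the cubic part vanishes
    have valHL : ∫ ω, (∑ a, ∑ b, ∑ c, Γ₀ k a * Γ₀ l b * Γ₀ᵀ.mulVec βv c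
        * (z ω a * z ω b * z ω c)) ∂μ = 0 := by
      rw [integral_finset_sum _ fun a _ => integrable_finset_sum _ fun b _ =>
        integrable_finset_sum _ fun c _ => (intZZZ a b c).const_mul _]
      refine Finset.sum_eq_zero fun a _ => ?_
      rw [integral_finset_sum _ fun b _ => integrable_finset_sum _ fun c _ =>
        (intZZZ a b c).const_mul _]
      refine Finset.sum_eq_zero fun b _ => ?_
      rw [integral_finset_sum _ fun c _ => (intZZZ a b c).const_mul _]
      refine Finset.sum_eq_zero fun c _ => ?_
      rw [integral_const_mul, I3, mul_zero]
    -- integral of the quartic part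
    have valHQ : ∫ ω, (∑ a, ∑ b, ∑ c, ∑ d, Γ₀ k a * Γ₀ l b * M c d
        * (z ω a * z ω b * z ω c * z ω d)) ∂μ
        = Sig k l * (∑ c, M c c) + (∑ a, ∑ b, Γ₀ k a * Γ₀ l b * M a b)
          + (∑ a, ∑ b, Γ₀ k a * Γ₀ l b * M b a)
          + (∑ a, Γ₀ k a * Γ₀ l a * M a a) * (Δ - 3) := by
      rw [integral_finset_sum _ fun a _ => integrable_finset_sum _ fun b _ =>
        integrable_finset_sum _ fun c _ => integrable_finset_sum _ fun d _ =>
        (intZZZZ a b c d).const_mul _]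
      have : ∀ a : Fin q, ∫ ω, (∑ b, ∑ c, ∑ d, Γ₀ k a * Γ₀ l b * M c d
          * (z ω a * z ω b * z ω c * z ω d)) ∂μ
          = ∑ b, ∑ c, ∑ d, Γ₀ k a * Γ₀ l b * M c d * ∫ ω, z ω a * z ω b * z ω c * z ω d ∂μ := by
        intro a
        rw [integral_finset_sum _ fun b _ => integrable_finset_sum _ fun c _ =>
          integrable_finset_sum _ fun d _ => (intZZZZ a b c d).const_mul _]
        refine Finset.sum_congr rfl fun b _ => ?_
        rw [integral_finset_sum _ fun c _ => integrable_finset_sum _ fun d _ =>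
          (intZZZZ a b c d).const_mul _]
        refine Finset.sum_congr rfl fun c _ => ?_
        rw [integral_finset_sum _ fun d _ => (intZZZZ a b c d).const_mul _]
        exact Finset.sum_congr rfl fun d _ => integral_const_mul _ _
      simp only [this, I4]
      simp only [mul_add, Finset.sum_add_distrib]
      congr 1
      · congr 1
        · congr 1
          · -- pairing (a=b)(c=d)
            rw [hSigE k l, Finset.sum_mul_sum]
            refine Finset.sum_congr rfl fun a _ => ?_
            simp [mul_ite, ite_mul, Finset.sum_ite_eq, Finset.mul_sum]
          · -- pairing (a=c)(b=d)
            simp [mul_ite, ite_mul, Finset.sum_ite_eq, Finset.mul_sum]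
        · -- pairing (a=d)(b=c)
          simp [mul_ite, ite_mul, Finset.sum_ite_eq, Finset.mul_sum]
      · -- diagonal term
        simp [mul_ite, ite_mul, Finset.sum_ite_eq, Finset.mul_sum, Finset.sum_mul]
    -- split of the target integral
    have hsplit : ∫ ω, (Y ω - ∫ ω', Y ω' ∂μ) * Γ₀.mulVec (z ω) k * Γ₀.mulVec (z ω) l ∂μ
        = ∫ ω, h ω * Y ω ∂μ - (∫ ω', Y ω' ∂μ) * ∫ ω, h ω ∂μ := by
      rw [show (fun ω => (Y ω - ∫ ω', Y ω' ∂μ) * Γ₀.mulVec (z ω) k * Γ₀.mulVec (z ω) l)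
          = fun ω => h ω * Y ω - (∫ ω', Y ω' ∂μ) * h ω from funext fun ω => by
        simp only [hh_def]; ring]
      rw [integral_sub hint_hY (hint_h.const_mul _), integral_const_mul]
    -- value of ∫ h * g
    have iL : Integrable (fun ω => ∑ a, ∑ b, ∑ c, Γ₀ k a * Γ₀ l b * Γ₀ᵀ.mulVec βv c
        * (z ω a * z ω b * z ω c)) μ :=
      integrable_finset_sum _ fun a _ => integrable_finset_sum _ fun b _ =>
        integrable_finset_sum _ fun c _ => (intZZZ a b c).const_mul _
    have iQ : Integrable (fun ω => ∑ a, ∑ b, ∑ c, ∑ d, Γ₀ k a * Γ₀ l b * M c d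
        * (z ω a * z ω b * z ω c * z ω d)) μ :=
      integrable_finset_sum _ fun a _ => integrable_finset_sum _ fun b _ =>
        integrable_finset_sum _ fun c _ => integrable_finset_sum _ fun d _ =>
          (intZZZZ a b c d).const_mul _
    have iA : Integrable (fun ω => αc * h ω) μ := hint_h.const_mul _
    have iAL : Integrable (fun ω => αc * h ω + ∑ a, ∑ b, ∑ c, Γ₀ k a * Γ₀ l b * Γ₀ᵀ.mulVec βv c
        * (z ω a * z ω b * z ω c)) μ := iA.add iL
    have hgval : ∫ ω, h ω * g ω ∂μ = αc * Sig k l + (Sig k l * (∑ c, M c c)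
        + (∑ a, ∑ b, Γ₀ k a * Γ₀ l b * M a b) + (∑ a, ∑ b, Γ₀ k a * Γ₀ l b * M b a)
        + (∑ a, Γ₀ k a * Γ₀ l a * M a a) * (Δ - 3)) := by
      rw [show (fun ω => h ω * g ω) = fun ω => (αc * h ω
        + ∑ a, ∑ b, ∑ c, Γ₀ k a * Γ₀ l b * Γ₀ᵀ.mulVec βv c * (z ω a * z ω b * z ω c))
        + ∑ a, ∑ b, ∑ c, ∑ d, Γ₀ k a * Γ₀ l b * M c d * (z ω a * z ω b * z ω c * z ω d)
        from funext fun ω => hptw ω]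
      rw [integral_add iAL iQ, integral_add iA iL, integral_const_mul, hval, valHL, valHQ]
      ring
    -- symmetry of M
    have hMsym : ∀ a b : Fin q, M b a = M a b := by
      intro a b
      have ht : Mᵀ = M := by
        rw [hM, Matrix.transpose_mul, Matrix.transpose_mul, Matrix.transpose_transpose,
          hOm.eq, ← Matrix.mul_assoc]
      have := congrFun (congrFun ht a) b
      rwa [Matrix.transpose_apply] at this
    have hP3 : (∑ a, ∑ b, Γ₀ k a * Γ₀ l b * M b a) = ∑ a, ∑ b, Γ₀ k a * Γ₀ l b * M a b :=
      Finset.sum_congr rfl fun a _ => Finset.sum_congr rfl fun b _ => by rw [hMsym a b]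
    have hP2 : (∑ a, ∑ b, Γ₀ k a * Γ₀ l b * M a b) = (Γ₀ * M * Γ₀ᵀ) k l := by
      simp only [Matrix.mul_apply, Matrix.transpose_apply, Finset.sum_mul]
      rw [Finset.sum_comm]
      exact Finset.sum_congr rfl fun a _ => Finset.sum_congr rfl fun b _ => by ring
    have hcorr : (∑ a, Γ₀ k a * Γ₀ l a * M a a) * (Δ - 3) = 0 := by
      rcases hC with h3 | hd
      · rw [h3]; ring
      · rw [Finset.sum_congr rfl fun a _ => by rw [hd a, mul_zero], Finset.sum_const_zero,
          zero_mul]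
    rw [hsplit, hIHY, hgval, hEg, hval, hP3, hP2, hcorr]
    ring
  -- conclusion
  have hSSS : Sig * Om * Sig = Γ₀ * M * Γ₀ᵀ := by
    rw [hM, ← hSig]
    simp only [Matrix.mul_assoc]
  have hfirst : (Matrix.of fun k l =>
      ∫ ω, (Y ω - ∫ ω', Y ω' ∂μ) * Γ₀.mulVec (z ω) k * Γ₀.mulVec (z ω) l ∂μ)
      = (2 : ℝ) • (Sig * Om * Sig) := by
    ext k l
    rw [Matrix.of_apply, key k l, hSSS, Matrix.smul_apply, smul_eq_mul]
  refine ⟨hfirst, ?_⟩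
  rw [hfirst]
  have hdet : IsUnit Sig.det := isUnit_iff_ne_zero.mpr hSigPD.det_pos.ne'
  rw [Matrix.mul_smul, Matrix.smul_mul, smul_smul]
  have h12 : (1/2 : ℝ) * 2 = 1 := by norm_num
  rw [h12, one_smul,
    show Sig * Om * Sig = Sig * (Om * Sig) from by rw [Matrix.mul_assoc],
    Matrix.nonsing_inv_mul_cancel_left _ _ hdet,
    Matrix.mul_nonsing_inv_cancel_right _ _ hdet]
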